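/- Let f : [0,∞) → [0,∞) be differentiable with f(0) = 0 and with derivative f′ that is concave, differentiable, and strictly increasing, and let 0 < ε ≤ 1. Consider the posted-price mechanism that offers item j at price f′(2·(s + 1/ε)) when s units of item j have been sold so far, and let α = 4(1+ε). Then for every run of this mechanism on any sequence of buyers and for every fractional allocation x, the welfare W of the mechanism satisfies W ≥ (1/α)·(welfare of x) − m·((1/α)·f*(f′(2/ε)) + f(1/ε − 1)). -/

import Mathlib

open Finset

/-- Convex conjugate of `f` restricted to `[0, ∞)`: `f*(q) = sup_{z ≥ 0} (q·z − f(z))`. -/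
noncomputable def conj (f : ℝ → ℝ) (q : ℝ) : ℝ :=
  sSup ((fun z => q * z - f z) '' Set.Ici 0)

/-- Number of units of item `j` sold to the buyers arriving strictly before time `i`,
under the allocation `S`. -/
def soldCount {m n : ℕ} (S : Fin n → Finset (Fin m)) (j : Fin m) (i : ℕ) : ℕ :=
  (Finset.univ.filter (fun i' : Fin n => (i' : ℕ) < i ∧ j ∈ S i')).card

section Helpers

lemma sc_mono {m n : ℕ} (S : Fin n → Finset (Fin m)) (j : Fin m) {i1 i2 : ℕ} (h : i1 ≤ i2) :
    soldCount S j i1 ≤ soldCount S j i2 := by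
  apply Finset.card_le_card
  intro i' hi'
  simp only [Finset.mem_filter] at *
  exact ⟨hi'.1, hi'.2.1.trans_le h, hi'.2.2⟩

lemma sc_lt {m n : ℕ} (S : Fin n → Finset (Fin m)) (j : Fin m) {i1 : Fin n} {i2 : ℕ}
    (h12 : (i1 : ℕ) < i2) (h : j ∈ S i1) :
    soldCount S j i1 < soldCount S j i2 := by
  apply Finset.card_lt_card
  constructor
  · intro i' hi'
    simp only [Finset.mem_filter] at *
    exact ⟨hi'.1, hi'.2.1.trans h12, hi'.2.2⟩
  · intro hsub
    have := hsub (by simp [h, h12] : i1 ∈ Finset.univ.filter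
      (fun i' : Fin n => (i' : ℕ) < i2 ∧ j ∈ S i'))
    simp at this

lemma sc_le_final {m n : ℕ} (S : Fin n → Finset (Fin m)) (j : Fin m) (i : Fin n) :
    soldCount S j i ≤ soldCount S j n :=
  sc_mono S j (le_of_lt i.isLt)

lemma sc_lt_final {m n : ℕ} (S : Fin n → Finset (Fin m)) (j : Fin m) (i : Fin n)
    (h : j ∈ S i) : soldCount S j i < soldCount S j n :=
  sc_lt S j i.isLt h

lemma card_A {m n : ℕ} (S : Fin n → Finset (Fin m)) (j : Fin m) :
    (Finset.univ.filter (fun i : Fin n => j ∈ S i)).card = soldCount S j n := by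
  unfold soldCount
  congr 1
  apply Finset.filter_congr
  intro i _
  simp [i.isLt]

lemma image_sc {m n : ℕ} (S : Fin n → Finset (Fin m)) (j : Fin m) :
    (Finset.univ.filter (fun i : Fin n => j ∈ S i)).image (fun i : Fin n => soldCount S j (i:ℕ))
      = Finset.range (soldCount S j n) := by
  have hinj : ∀ i1 ∈ Finset.univ.filter (fun i : Fin n => j ∈ S i),
      ∀ i2 ∈ Finset.univ.filter (fun i : Fin n => j ∈ S i),
      soldCount S j i1 = soldCount S j i2 → i1 = i2 := by
    intro i1 h1 i2 h2 heq
    simp only [Finset.mem_filter] at h1 h2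
    by_contra hne
    rcases lt_or_gt_of_ne (fun h : i1 = i2 => hne h) with h | h
    · exact absurd heq (Nat.ne_of_lt (sc_lt S j h h1.2))
    · exact absurd heq.symm (Nat.ne_of_lt (sc_lt S j h h2.2))
  apply Finset.eq_of_subset_of_card_le
  · intro s hs
    simp only [Finset.mem_image] at hs
    obtain ⟨i, hi, rfl⟩ := hs
    simp only [Finset.mem_filter] at hi
    exact Finset.mem_range.mpr (sc_lt_final S j i hi.2)
  · rw [Finset.card_range, Finset.card_image_of_injOn hinj, card_A]

lemma pay_eq {m n : ℕ} (S : Fin n → Finset (Fin m)) (F : Fin m → ℕ → ℝ) :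
    ∑ i, ∑ j ∈ S i, F j (soldCount S j i) =
    ∑ j, ∑ s ∈ Finset.range (soldCount S j n), F j s := by
  have h1 : ∀ i : Fin n, ∑ j ∈ S i, F j (soldCount S j i)
      = ∑ j : Fin m, if j ∈ S i then F j (soldCount S j i) else 0 := by
    intro i
    rw [Finset.sum_ite_mem, Finset.univ_inter]
  simp_rw [h1]
  rw [Finset.sum_comm]
  congr 1
  funext j
  rw [← Finset.sum_filter, ← image_sc S j,
    Finset.sum_image (by
      intro i1 h1 i2 h2 heq
      simp only [Finset.mem_coe, Finset.mem_filter] at h1 h2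
      by_contra hne
      rcases lt_or_gt_of_ne (fun h : i1 = i2 => hne h) with h | h
      · exact absurd heq (Nat.ne_of_lt (sc_lt S j h h1.2))
      · exact absurd heq.symm (Nat.ne_of_lt (sc_lt S j h h2.2)))]

lemma tangent (f f' : ℝ → ℝ)
    (hderiv : ∀ y ≥ (0:ℝ), HasDerivWithinAt f (f' y) (Set.Ici 0) y)
    (h'mono : StrictMonoOn f' (Set.Ici 0))
    {a z : ℝ} (ha : 0 ≤ a) (hz : 0 ≤ z) :
    f a + f' a * (z - a) ≤ f z := by
  have hcont : ContinuousOn f (Set.Ici 0) := fun y hy => (hderiv y hy).continuousWithinAt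
  have hat : ∀ y : ℝ, 0 < y → HasDerivAt f (f' y) y := fun y hy =>
    (hderiv y hy.le).hasDerivAt (Ici_mem_nhds hy)
  rcases lt_trichotomy a z with h | h | h
  · obtain ⟨ξ, hξ, hslope⟩ := exists_hasDerivAt_eq_slope f f' h
      (hcont.mono (fun t ht => le_trans ha ht.1))
      (fun ξ hξ => hat ξ (lt_of_le_of_lt ha hξ.1))
    have hmono : f' a ≤ f' ξ :=
      (h'mono ha (le_of_lt (lt_of_le_of_lt ha hξ.1)) hξ.1).le
    have hza : (0:ℝ) < z - a := by linarith
    have : f' ξ * (z - a) = f z - f a := by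
      rw [hslope]; field_simp
    nlinarith
  · simp [h]
  · obtain ⟨ξ, hξ, hslope⟩ := exists_hasDerivAt_eq_slope f f' h
      (hcont.mono (fun t ht => le_trans hz ht.1))
      (fun ξ hξ => hat ξ (lt_of_le_of_lt hz hξ.1))
    have hmono : f' ξ ≤ f' a :=
      (h'mono (le_of_lt (lt_of_le_of_lt hz hξ.1)) ha hξ.2).le
    have hza : (0:ℝ) < a - z := by linarith
    have : f' ξ * (a - z) = f a - f z := by
      rw [hslope]; field_simp
    nlinarith

lemma key (f f' : ℝ → ℝ)
    (hf0 : f 0 = 0)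
    (hderiv : ∀ y ≥ (0:ℝ), HasDerivWithinAt f (f' y) (Set.Ici 0) y)
    (h'conc : ConcaveOn ℝ (Set.Ici 0) f')
    (h'mono : StrictMonoOn f' (Set.Ici 0))
    (c : ℝ) (hc : 1 ≤ c) (Y : ℕ) :
    2*((Y:ℝ) + c) * f' (2*((Y:ℝ) + c)) - f (2*((Y:ℝ) + c))
      ≤ 4*(1+1/c) * ((∑ s ∈ Finset.range Y, f' (2*((s:ℝ)+c))) - f (Y:ℝ))
        + (2*c * f' (2*c) - f (2*c)) := by
  have hc0 : (0:ℝ) < c := lt_of_lt_of_le one_pos hc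
  set α : ℝ := 4*(1+1/c) with hα
  set g := f' with hg
  have per : ∀ s ∈ Finset.range Y,
      (2*(((s:ℝ)+1) + c) * g (2*(((s:ℝ)+1) + c)) - 2*((s:ℝ)+c) * g (2*((s:ℝ)+c)))
        - (f (2*(((s:ℝ)+1) + c)) - f (2*((s:ℝ)+c)))
      ≤ α * (g (2*((s:ℝ)+c)) - (f ((s:ℝ)+1) - f (s:ℝ))) := by
    intro s _
    set t : ℝ := 2*((s:ℝ)+c) with ht
    have hs0 : (0:ℝ) ≤ (s:ℝ) := Nat.cast_nonneg s
    have hx0 : (0:ℝ) ≤ (s:ℝ)+c := by linarith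
    have hxy : (s:ℝ)+c < t := by rw [ht]; linarith
    have hyz : t < t + 2 := by linarith
    have ht0 : (0:ℝ) < t := by rw [ht]; linarith
    have hslope := h'conc.slope_anti_adjacent (x := (s:ℝ)+c) (y := t) (z := t+2)
      hx0 (by simp only [Set.mem_Ici]; linarith) hxy hyz
    have hgmono1 : g ((s:ℝ)+c) ≤ g t := (h'mono hx0 (by simp only [Set.mem_Ici]; linarith) hxy).le
    have hD : (t+2) * (g (t+2) - g t) ≤ α * (g t - g ((s:ℝ)+c)) := by
      have h1 : (g (t+2) - g t) / 2 ≤ (g t - g ((s:ℝ)+c)) / ((s:ℝ)+c) := by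
        have := hslope
        have e1 : t + 2 - t = 2 := by ring
        have e2 : t - ((s:ℝ)+c) = (s:ℝ)+c := by rw [ht]; ring
        rwa [e1, e2] at this
      have hsc0 : (0:ℝ) < (s:ℝ) + c := by linarith
      have h2 : (g (t+2) - g t) * ((s:ℝ)+c) ≤ 2 * (g t - g ((s:ℝ)+c)) := by
        rw [div_le_div_iff₀ (by norm_num) hsc0] at h1
        linarith
      rcases le_or_gt (g (t+2)) (g t) with hle | hlt
      · have : (0:ℝ) ≤ α := by positivity
        nlinarith [hgmono1]
      · have hα' : (t+2) * ((g (t+2) - g t)) ≤ (t+2) / ((s:ℝ)+c) * (2 * (g t - g ((s:ℝ)+c))) := by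
          rw [div_mul_eq_mul_div, le_div_iff₀ hsc0]
          nlinarith [h2, ht0]
        have hcoef : (t+2) / ((s:ℝ)+c) * 2 ≤ α := by
          rw [hα, ht, div_mul_eq_mul_div, div_le_iff₀ hsc0]
          have hinv : 1/c * c = 1 := one_div_mul_cancel hc0.ne'
          have hsn : (0:ℝ) ≤ (s:ℝ) * (1/c) := by positivity
          nlinarith
        calc (t+2) * (g (t+2) - g t)
            ≤ (t+2) / ((s:ℝ)+c) * (2 * (g t - g ((s:ℝ)+c))) := hα'
          _ = ((t+2) / ((s:ℝ)+c) * 2) * (g t - g ((s:ℝ)+c)) := by ring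
          _ ≤ α * (g t - g ((s:ℝ)+c)) := by
              apply mul_le_mul_of_nonneg_right hcoef
              linarith
    have hA : f t + g t * 2 ≤ f (t+2) :=  by
      have := tangent f f' hderiv h'mono (a := t) (z := t+2) ht0.le (by linarith)
      have e : t + 2 - t = 2 := by ring
      rwa [e] at this
    have hB : f ((s:ℝ)+1) - f (s:ℝ) ≤ g ((s:ℝ)+1) := by
      have := tangent f f' hderiv h'mono (a := (s:ℝ)+1) (z := (s:ℝ)) (by linarith) hs0
      have e : (s:ℝ) - ((s:ℝ)+1) = -1 := by ring
      rw [e] at this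
      linarith
    have hC : g ((s:ℝ)+1) ≤ g ((s:ℝ)+c) := by
      rcases eq_or_lt_of_le hc with h | h
      · rw [← h]
      · exact (h'mono (by simp only [Set.mem_Ici]; linarith)
          (by simp only [Set.mem_Ici]; linarith) (by linarith)).le
    have hα0 : (0:ℝ) ≤ α := by positivity
    have e2 : 2*(((s:ℝ)+1) + c) = t + 2 := by rw [ht]; ring
    rw [e2]
    nlinarith [hD, hA, hB, hC, mul_le_mul_of_nonneg_left (hB.trans hC) hα0]
  have hsum := Finset.sum_le_sum per
  have t1 : ∑ s ∈ Finset.range Y,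
      (2*(((s:ℝ)+1) + c) * g (2*(((s:ℝ)+1) + c)) - 2*((s:ℝ)+c) * g (2*((s:ℝ)+c)))
      = 2*((Y:ℝ) + c) * g (2*((Y:ℝ) + c)) - 2*((0:ℝ)+c) * g (2*((0:ℝ)+c)) := by
    have := Finset.sum_range_sub (fun s : ℕ => 2*((s:ℝ)+c) * g (2*((s:ℝ)+c))) Y
    simpa using this
  have t2 : ∑ s ∈ Finset.range Y, (f (2*(((s:ℝ)+1) + c)) - f (2*((s:ℝ)+c)))
      = f (2*((Y:ℝ) + c)) - f (2*((0:ℝ)+c)) := by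
    have := Finset.sum_range_sub (fun s : ℕ => f (2*((s:ℝ)+c))) Y
    simpa using this
  have t3 : ∑ s ∈ Finset.range Y, (f ((s:ℝ)+1) - f (s:ℝ)) = f (Y:ℝ) - f 0 := by
    have := Finset.sum_range_sub (fun s : ℕ => f (s:ℝ)) Y
    simpa using this
  rw [Finset.sum_sub_distrib, t1, t2] at hsum
  have hr : (∑ i ∈ Finset.range Y, α * (g (2*((i:ℝ)+c)) - (f ((i:ℝ)+1) - f (i:ℝ))))
      = α * ((∑ s ∈ Finset.range Y, g (2*((s:ℝ)+c))) - f (Y:ℝ)) := by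
    rw [← Finset.mul_sum, Finset.sum_sub_distrib, t3, hf0]
    ring
  rw [hr] at hsum
  have e0 : (2:ℝ)*((0:ℝ)+c) = 2*c := by ring
  rw [e0] at hsum
  linarith

lemma conj_ub (f f' : ℝ → ℝ)
    (hderiv : ∀ y ≥ (0:ℝ), HasDerivWithinAt f (f' y) (Set.Ici 0) y)
    (h'mono : StrictMonoOn f' (Set.Ici 0))
    {a : ℝ} (ha : 0 ≤ a) :
    ∀ w ∈ (fun z => f' a * z - f z) '' Set.Ici 0, w ≤ f' a * a - f a := by
  rintro w ⟨z, hz, rfl⟩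
  have h := tangent f f' hderiv h'mono ha hz
  have e : f' a * (z - a) = f' a * z - f' a * a := by ring
  simp only []
  linarith

lemma conj_le (f f' : ℝ → ℝ)
    (hderiv : ∀ y ≥ (0:ℝ), HasDerivWithinAt f (f' y) (Set.Ici 0) y)
    (h'mono : StrictMonoOn f' (Set.Ici 0))
    {a : ℝ} (ha : 0 ≤ a) :
    conj f (f' a) ≤ f' a * a - f a := by
  apply csSup_le
  · exact ⟨f' a * 0 - f 0, ⟨0, Set.mem_Ici.mpr le_rfl, rfl⟩⟩
  · exact conj_ub f f' hderiv h'mono ha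

lemma le_conj (f f' : ℝ → ℝ)
    (hderiv : ∀ y ≥ (0:ℝ), HasDerivWithinAt f (f' y) (Set.Ici 0) y)
    (h'mono : StrictMonoOn f' (Set.Ici 0))
    {a y : ℝ} (ha : 0 ≤ a) (hy : 0 ≤ y) :
    f' a * y - f y ≤ conj f (f' a) := by
  apply le_csSup
  · exact ⟨f' a * a - f a, conj_ub f f' hderiv h'mono ha⟩
  · exact ⟨y, hy, rfl⟩

end Helpers

/-- for a production cost `f : [0,∞) → [0,∞)` with `f(0) = 0` whose
derivative `f'` is concave, differentiable, and strictly increasing, the posted-price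
mechanism offering item `j` at price `f'(2·(s + 1/ε))` after `s` units of item `j` have
been sold is `4(1+ε)`-competitive against every fractional allocation, up to the
additive constant `m·((1/(4(1+ε)))·f*(f'(2/ε)) + f(1/ε − 1))`. -/
theorem stmt8 (m n : ℕ) (ε : ℝ) (hε0 : 0 < ε) (hε1 : ε ≤ 1)
    (f f' : ℝ → ℝ)
    (hf0 : f 0 = 0)
    (hfnn : ∀ y ≥ (0:ℝ), 0 ≤ f y)
    (hderiv : ∀ y ≥ (0:ℝ), HasDerivWithinAt f (f' y) (Set.Ici 0) y)
    (h'conc : ConcaveOn ℝ (Set.Ici 0) f')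
    (h'diff : DifferentiableOn ℝ f' (Set.Ici 0))
    (h'mono : StrictMonoOn f' (Set.Ici 0))
    (v : Fin n → Finset (Fin m) → ℝ)
    (hv0 : ∀ i, v i ∅ = 0)
    (hvnn : ∀ i T, 0 ≤ v i T)
    (S : Fin n → Finset (Fin m))
    (hrun : ∀ i : Fin n, ∀ T : Finset (Fin m),
      v i (S i) - ∑ j ∈ S i, f' (2 * ((soldCount S j i : ℝ) + 1/ε)) ≥
        v i T - ∑ j ∈ T, f' (2 * ((soldCount S j i : ℝ) + 1/ε)))
    (x : Fin n → Finset (Fin m) → ℝ)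
    (hxnn : ∀ i T, 0 ≤ x i T)
    (hxle : ∀ i, ∑ T : Finset (Fin m), x i T ≤ 1) :
    (∑ i, v i (S i)) - ∑ j, f (soldCount S j n) ≥
      (1 / (4 * (1+ε))) *
        ((∑ i, ∑ T : Finset (Fin m), v i T * x i T) -
          ∑ j, f (∑ i, ∑ T ∈ Finset.univ.filter (fun T : Finset (Fin m) => j ∈ T), x i T))
      - (m : ℝ) * ((1 / (4 * (1+ε))) * conj f (f' (2/ε)) + f (1/ε - 1)) := by

  have hc : (1:ℝ) ≤ 1/ε := by
    rw [le_div_iff₀ hε0, one_mul]; exact hε1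
  set c : ℝ := 1/ε with hcdef
  have hc0 : (0:ℝ) < c := lt_of_lt_of_le one_pos hc
  have h2c : 2/ε = 2*c := by rw [hcdef]; ring
  have hεc : ε = 1/c := by rw [hcdef, one_div_one_div]
  have hq0 : ∀ N : ℕ, (0:ℝ) ≤ 2*((N:ℝ)+c) := by
    intro N
    have : (0:ℝ) ≤ (N:ℝ) := Nat.cast_nonneg N
    linarith
  -- utility nonneg
  have hu0 : ∀ i, 0 ≤ v i (S i) - ∑ j ∈ S i, f' (2*((soldCount S j i : ℝ) + c)) := by
    intro i
    have h := hrun i ∅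
    simp only [Finset.sum_empty, hv0 i] at h
    linarith
  -- price monotonicity bound
  have hub : ∀ (i : Fin n) (T : Finset (Fin m)),
      v i T - ∑ j ∈ T, f' (2*((soldCount S j n : ℝ) + c))
        ≤ v i (S i) - ∑ j ∈ S i, f' (2*((soldCount S j i : ℝ) + c)) := by
    intro i T
    have h1 := hrun i T
    have h2 : ∑ j ∈ T, f' (2*((soldCount S j i : ℝ) + c))
        ≤ ∑ j ∈ T, f' (2*((soldCount S j n : ℝ) + c)) := by
      apply Finset.sum_le_sum
      intro j _
      have hle : (soldCount S j i : ℝ) ≤ (soldCount S j n : ℝ) :=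
        Nat.cast_le.mpr (sc_le_final S j i)
      exact h'mono.monotoneOn (Set.mem_Ici.mpr (hq0 _)) (Set.mem_Ici.mpr (hq0 _)) (by linarith)
    linarith
  -- fractional utility bound per buyer
  have hufrac : ∀ i : Fin n,
      (∑ T : Finset (Fin m), x i T * (v i T - ∑ j ∈ T, f' (2*((soldCount S j n : ℝ) + c))))
        ≤ v i (S i) - ∑ j ∈ S i, f' (2*((soldCount S j i : ℝ) + c)) := by
    intro i
    calc (∑ T : Finset (Fin m), x i T * (v i T - ∑ j ∈ T, f' (2*((soldCount S j n : ℝ) + c))))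
        ≤ ∑ T : Finset (Fin m), x i T * (v i (S i) - ∑ j ∈ S i, f' (2*((soldCount S j i : ℝ) + c))) :=
          Finset.sum_le_sum fun T _ => mul_le_mul_of_nonneg_left (hub i T) (hxnn i T)
      _ = (∑ T : Finset (Fin m), x i T) * (v i (S i) - ∑ j ∈ S i, f' (2*((soldCount S j i : ℝ) + c))) :=
          (Finset.sum_mul _ _ _).symm
      _ ≤ 1 * (v i (S i) - ∑ j ∈ S i, f' (2*((soldCount S j i : ℝ) + c))) :=
          mul_le_mul_of_nonneg_right (hxle i) (hu0 i)
      _ = _ := one_mul _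
  have hsum1 : (∑ i, ∑ T : Finset (Fin m), x i T * (v i T - ∑ j ∈ T, f' (2*((soldCount S j n : ℝ) + c))))
      ≤ ∑ i, (v i (S i) - ∑ j ∈ S i, f' (2*((soldCount S j i : ℝ) + c))) :=
    Finset.sum_le_sum fun i _ => hufrac i
  -- swap
  have hswap : (∑ i, ∑ T : Finset (Fin m), x i T * ∑ j ∈ T, f' (2*((soldCount S j n : ℝ) + c)))
      = ∑ j, (∑ i, ∑ T ∈ Finset.univ.filter (fun T : Finset (Fin m) => j ∈ T), x i T)
          * f' (2*((soldCount S j n : ℝ) + c)) := by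
    have e1 : ∀ (i : Fin n) (T : Finset (Fin m)),
        x i T * ∑ j ∈ T, f' (2*((soldCount S j n : ℝ) + c))
          = ∑ j : Fin m, if j ∈ T then x i T * f' (2*((soldCount S j n : ℝ) + c)) else 0 := by
      intro i T
      rw [Finset.sum_ite_mem, Finset.univ_inter, Finset.mul_sum]
    calc (∑ i, ∑ T : Finset (Fin m), x i T * ∑ j ∈ T, f' (2*((soldCount S j n : ℝ) + c)))
        = ∑ i, ∑ T : Finset (Fin m), ∑ j : Fin m,
            if j ∈ T then x i T * f' (2*((soldCount S j n : ℝ) + c)) else 0 := by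
          exact Finset.sum_congr rfl fun i _ => Finset.sum_congr rfl fun T _ => e1 i T
      _ = ∑ i, ∑ j : Fin m, ∑ T : Finset (Fin m),
            if j ∈ T then x i T * f' (2*((soldCount S j n : ℝ) + c)) else 0 :=
          Finset.sum_congr rfl fun i _ => Finset.sum_comm
      _ = ∑ j : Fin m, ∑ i, ∑ T : Finset (Fin m),
            if j ∈ T then x i T * f' (2*((soldCount S j n : ℝ) + c)) else 0 :=
          Finset.sum_comm
      _ = ∑ j, ∑ i, (∑ T ∈ Finset.univ.filter (fun T : Finset (Fin m) => j ∈ T), x i T)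
            * f' (2*((soldCount S j n : ℝ) + c)) := by
          refine Finset.sum_congr rfl fun j _ => Finset.sum_congr rfl fun i _ => ?_
          rw [← Finset.sum_filter, ← Finset.sum_mul]
      _ = ∑ j, (∑ i, ∑ T ∈ Finset.univ.filter (fun T : Finset (Fin m) => j ∈ T), x i T)
            * f' (2*((soldCount S j n : ℝ) + c)) := by
          exact Finset.sum_congr rfl fun j _ => (Finset.sum_mul _ _ _).symm
  -- payments identity
  have hpay : (∑ i, ∑ j ∈ S i, f' (2*((soldCount S j i : ℝ) + c)))
      = ∑ j, ∑ s ∈ Finset.range (soldCount S j n), f' (2*((s:ℝ)+c)) :=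
    pay_eq S (fun j s => f' (2*((s:ℝ)+c)))
  -- per-item Fenchel + key inequality
  have hitem : ∀ j : Fin m,
      (∑ i, ∑ T ∈ Finset.univ.filter (fun T : Finset (Fin m) => j ∈ T), x i T)
          * f' (2*((soldCount S j n : ℝ) + c))
        ≤ f (∑ i, ∑ T ∈ Finset.univ.filter (fun T : Finset (Fin m) => j ∈ T), x i T)
          + (4*(1+ε)) * ((∑ s ∈ Finset.range (soldCount S j n), f' (2*((s:ℝ)+c)))
              - f (soldCount S j n : ℝ))
          + conj f (f' (2/ε)) := by
    intro j
    have hyj0 : 0 ≤ ∑ i, ∑ T ∈ Finset.univ.filter (fun T : Finset (Fin m) => j ∈ T), x i T :=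
      Finset.sum_nonneg fun i _ => Finset.sum_nonneg fun T _ => hxnn i T
    have hF := le_conj f f' hderiv h'mono (a := 2*((soldCount S j n : ℝ) + c))
      (y := ∑ i, ∑ T ∈ Finset.univ.filter (fun T : Finset (Fin m) => j ∈ T), x i T)
      (hq0 _) hyj0
    have hCle := conj_le f f' hderiv h'mono (a := 2*((soldCount S j n : ℝ) + c)) (hq0 _)
    have hkey := key f f' hf0 hderiv h'conc h'mono c hc (soldCount S j n)
    have hα : 4*(1+1/c) = 4*(1+ε) := by rw [hεc]
    rw [hα] at hkey
    have hCge : 2*c*f' (2*c) - f (2*c) ≤ conj f (f' (2*c)) := by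
      have := le_conj f f' hderiv h'mono (a := 2*c) (y := 2*c) (by linarith) (by linarith)
      linarith [this, mul_comm (f' (2*c)) (2*c)]
    rw [h2c]
    have hcomm1 : 2*((soldCount S j n : ℝ) + c) * f' (2*((soldCount S j n : ℝ) + c))
        = f' (2*((soldCount S j n : ℝ) + c)) * (2*((soldCount S j n : ℝ) + c)) := mul_comm _ _
    have hcomm2 : (∑ i, ∑ T ∈ Finset.univ.filter (fun T : Finset (Fin m) => j ∈ T), x i T)
          * f' (2*((soldCount S j n : ℝ) + c))
        = f' (2*((soldCount S j n : ℝ) + c))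
          * (∑ i, ∑ T ∈ Finset.univ.filter (fun T : Finset (Fin m) => j ∈ T), x i T) :=
      mul_comm _ _
    linarith [hF, hCle, hkey, hCge]
  have hsumitem : (∑ j : Fin m,
      (∑ i, ∑ T ∈ Finset.univ.filter (fun T : Finset (Fin m) => j ∈ T), x i T)
        * f' (2*((soldCount S j n : ℝ) + c)))
      ≤ ∑ j : Fin m,
        (f (∑ i, ∑ T ∈ Finset.univ.filter (fun T : Finset (Fin m) => j ∈ T), x i T)
          + (4*(1+ε)) * ((∑ s ∈ Finset.range (soldCount S j n), f' (2*((s:ℝ)+c)))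
              - f (soldCount S j n : ℝ))
          + conj f (f' (2/ε))) := Finset.sum_le_sum fun j _ => hitem j
  -- expand the RHS of hsumitem
  have hexp2 : (∑ j : Fin m,
      (f (∑ i, ∑ T ∈ Finset.univ.filter (fun T : Finset (Fin m) => j ∈ T), x i T)
        + (4*(1+ε)) * ((∑ s ∈ Finset.range (soldCount S j n), f' (2*((s:ℝ)+c)))
            - f (soldCount S j n : ℝ))
        + conj f (f' (2/ε))))
      = (∑ j : Fin m, f (∑ i, ∑ T ∈ Finset.univ.filter (fun T : Finset (Fin m) => j ∈ T), x i T))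
        + (4*(1+ε)) * ((∑ j, ∑ s ∈ Finset.range (soldCount S j n), f' (2*((s:ℝ)+c)))
            - ∑ j, f (soldCount S j n : ℝ))
        + (m:ℝ) * conj f (f' (2/ε)) := by
    rw [Finset.sum_add_distrib, Finset.sum_add_distrib, ← Finset.mul_sum,
      Finset.sum_sub_distrib, Finset.sum_const, Finset.card_univ, Fintype.card_fin,
      nsmul_eq_mul]
  rw [hexp2] at hsumitem
  -- put together utilities
  have hexp : ∀ i : Fin n,
      (∑ T : Finset (Fin m), x i T * (v i T - ∑ j ∈ T, f' (2*((soldCount S j n : ℝ) + c))))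
      = (∑ T : Finset (Fin m), x i T * v i T)
        - ∑ T : Finset (Fin m), x i T * ∑ j ∈ T, f' (2*((soldCount S j n : ℝ) + c)) := by
    intro i
    rw [← Finset.sum_sub_distrib]
    exact Finset.sum_congr rfl fun T _ => by ring
  have hA : (∑ i, ∑ T : Finset (Fin m), x i T * v i T)
      - (∑ j, (∑ i, ∑ T ∈ Finset.univ.filter (fun T : Finset (Fin m) => j ∈ T), x i T)
          * f' (2*((soldCount S j n : ℝ) + c)))
      ≤ ∑ i, (v i (S i) - ∑ j ∈ S i, f' (2*((soldCount S j i : ℝ) + c))) := by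
    calc (∑ i, ∑ T : Finset (Fin m), x i T * v i T)
        - (∑ j, (∑ i, ∑ T ∈ Finset.univ.filter (fun T : Finset (Fin m) => j ∈ T), x i T)
            * f' (2*((soldCount S j n : ℝ) + c)))
        = (∑ i, ∑ T : Finset (Fin m), x i T * v i T)
          - (∑ i, ∑ T : Finset (Fin m), x i T * ∑ j ∈ T, f' (2*((soldCount S j n : ℝ) + c))) := by
          rw [hswap]
      _ = ∑ i, ((∑ T : Finset (Fin m), x i T * v i T)
            - ∑ T : Finset (Fin m), x i T * ∑ j ∈ T, f' (2*((soldCount S j n : ℝ) + c))) :=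
          (Finset.sum_sub_distrib _ _).symm
      _ = ∑ i, ∑ T : Finset (Fin m), x i T * (v i T - ∑ j ∈ T, f' (2*((soldCount S j n : ℝ) + c))) :=
          Finset.sum_congr rfl fun i _ => (hexp i).symm
      _ ≤ _ := hsum1
  -- mechanism welfare decomposition
  have hW : ∑ i, (v i (S i) - ∑ j ∈ S i, f' (2*((soldCount S j i : ℝ) + c)))
      = (∑ i, v i (S i)) - ∑ j, ∑ s ∈ Finset.range (soldCount S j n), f' (2*((s:ℝ)+c)) := by
    rw [Finset.sum_sub_distrib, hpay]
  have hUnn : 0 ≤ ∑ i, (v i (S i) - ∑ j ∈ S i, f' (2*((soldCount S j i : ℝ) + c))) :=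
    Finset.sum_nonneg fun i _ => hu0 i
  -- commute value sum to match the goal
  have hVc : (∑ i, ∑ T : Finset (Fin m), v i T * x i T)
      = ∑ i, ∑ T : Finset (Fin m), x i T * v i T :=
    Finset.sum_congr rfl fun i _ => Finset.sum_congr rfl fun T _ => mul_comm _ _
  -- final arithmetic
  set U := ∑ i, (v i (S i) - ∑ j ∈ S i, f' (2*((soldCount S j i : ℝ) + c))) with hU
  set Vp := ∑ i, ∑ T : Finset (Fin m), x i T * v i T with hVp
  set Fp := ∑ j : Fin m, f (∑ i, ∑ T ∈ Finset.univ.filter (fun T : Finset (Fin m) => j ∈ T), x i T) with hFp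
  set Rs := ∑ j : Fin m, ∑ s ∈ Finset.range (soldCount S j n), f' (2*((s:ℝ)+c)) with hRs
  set FY := ∑ j : Fin m, f ((soldCount S j n : ℝ)) with hFY
  set Cc := conj f (f' (2/ε)) with hCc
  have hkeysum : Vp - Fp - (4*(1+ε))*(Rs - FY) - (m:ℝ)*Cc ≤ U := by
    linarith [hA, hsumitem]
  have hdec : (∑ i, v i (S i)) - FY = U + (Rs - FY) := by
    rw [hW]
    ring
  have hαge : (1:ℝ) ≤ 4*(1+ε) := by linarith
  have hmain : Vp - Fp - (m:ℝ)*Cc ≤ (4*(1+ε)) * ((∑ i, v i (S i)) - FY) := by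
    have h3 : 1*U ≤ (4*(1+ε))*U := mul_le_mul_of_nonneg_right hαge hUnn
    calc Vp - Fp - (m:ℝ)*Cc ≤ U + (4*(1+ε))*(Rs - FY) := by linarith [hkeysum]
      _ ≤ (4*(1+ε))*U + (4*(1+ε))*(Rs - FY) := by linarith [h3]
      _ = (4*(1+ε)) * ((∑ i, v i (S i)) - FY) := by rw [hdec]; ring
  have hαpos : (0:ℝ) < 4*(1+ε) := by linarith
  have hstep : (1/(4*(1+ε))) * (Vp - Fp - (m:ℝ)*Cc) ≤ (∑ i, v i (S i)) - FY := by
    have h4 := mul_le_mul_of_nonneg_left hmain (le_of_lt (by positivity : (0:ℝ) < 1/(4*(1+ε))))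
    have h5 : (1/(4*(1+ε))) * ((4*(1+ε)) * ((∑ i, v i (S i)) - FY)) = (∑ i, v i (S i)) - FY := by
      field_simp
    linarith [h4, h5]
  have hfc : 0 ≤ f (c-1) := hfnn _ (by linarith)
  have hmf : 0 ≤ (m:ℝ) * f (c-1) := mul_nonneg (Nat.cast_nonneg m) hfc
  have hring : (1 / (4 * (1+ε))) * (Vp - Fp) - (m : ℝ) * ((1 / (4 * (1+ε))) * Cc + f (c - 1))
      = (1/(4*(1+ε))) * (Vp - Fp - (m:ℝ)*Cc) - (m:ℝ) * f (c-1) := by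
    ring
  rw [ge_iff_le, hVc]
  rw [hring]
  linarith [hstep, hmf]
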